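/- Let D be an (n,α,p)-pseudorandom digraph with p = ω((log n)^8/n), γ ∈ (0,1), ℓ ≥ 5·log n, t ≥ 4(log n)^2/p, and let {(a_i,b_i)}_{i=1}^t be pairs with distinct a_i's and distinct b_i's. Let R_A, R_B be disjoint subsets of V(D) avoiding all a_i, b_i such that |R_A|, |R_B| ≥ 12tℓ/γ, and for X ∈ {A,B} and every S ⊆ R_A ∪ R_B ∪ ∪_i{a_i,b_i} with |S| ≥ (log n)^2/p we have |N^+(S,R_X)|, |N^−(S,R_X)| ≥ (1/2+γ)|R_X|. Then for any σ ∈ {+,−}^ℓ there exist an index set I ⊆ [t] of size ⌊t/2⌋ and ⌊t/2⌋ internally disjoint σ-walks P_i (i ∈ I) connecting a_i to b_i with all internal vertices in R_A ∪ R_B. -/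

import Mathlib

set_option linter.unusedSectionVars false
set_option linter.unusedVariables false
set_option maxHeartbeats 4000000

open Finset

open Finset

variable {V : Type*} [Fintype V] [DecidableEq V]

/-- generic neighbourhood of `X` inside `pool` along boolean relation `r`. -/
def nbd (pool : Finset V) (r : V → V → Bool) (X : Finset V) : Finset V :=
  pool.filter (fun y => ∃ x ∈ X, r x y = true)

lemma nbd_subset (pool : Finset V) (r : V → V → Bool) (X : Finset V) :
    nbd pool r X ⊆ pool := filter_subset _ _

lemma mem_nbd {pool : Finset V} {r : V → V → Bool} {X : Finset V} {y : V} :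
    y ∈ nbd pool r X ↔ y ∈ pool ∧ ∃ x ∈ X, r x y = true := by
  simp [nbd]

lemma nbd_mono_pool {pool pool' : Finset V} (h : pool' ⊆ pool) (r : V → V → Bool)
    (X : Finset V) : nbd pool' r X ⊆ nbd pool r X := by
  intro y hy
  rw [mem_nbd] at hy ⊢
  exact ⟨h hy.1, hy.2⟩

lemma nbd_mono {pool : Finset V} {r : V → V → Bool} {X Y : Finset V} (h : X ⊆ Y) :
    nbd pool r X ⊆ nbd pool r Y := by
  intro y hy
  rw [mem_nbd] at hy ⊢
  obtain ⟨hp, x, hx, hr⟩ := hy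
  exact ⟨hp, x, h hx, hr⟩

lemma nbd_union (pool : Finset V) (r : V → V → Bool) (X Y : Finset V) :
    nbd pool r (X ∪ Y) = nbd pool r X ∪ nbd pool r Y := by
  ext y
  simp only [mem_nbd, mem_union]
  constructor
  · rintro ⟨hp, x, hx | hx, hr⟩
    · exact Or.inl ⟨hp, x, hx, hr⟩
    · exact Or.inr ⟨hp, x, hx, hr⟩
  · rintro (⟨hp, x, hx, hr⟩ | ⟨hp, x, hx, hr⟩)
    · exact ⟨hp, x, Or.inl hx, hr⟩
    · exact ⟨hp, x, Or.inr hx, hr⟩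

lemma nbd_pool_split {pool base : Finset V} (h : pool ⊆ base) (r : V → V → Bool)
    (X : Finset V) : nbd base r X ⊆ nbd pool r X ∪ (base \ pool) := by
  intro y hy
  rw [mem_nbd] at hy
  by_cases hp : y ∈ pool
  · exact mem_union_left _ (mem_nbd.2 ⟨hp, hy.2⟩)
  · exact mem_union_right _ (mem_sdiff.2 ⟨hy.1, hp⟩)

namespace Blocker

/-- union of the members of a list -/
def memU : List (Finset V × Bool) → Finset V
  | [] => ∅
  | (X, _) :: l => X ∪ memU l

/-- union of members of a given type -/
def tU (tp : Bool) : List (Finset V × Bool) → Finset V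
  | [] => ∅
  | (X, t) :: l => (if t = tp then X else ∅) ∪ tU tp l

/-- sum of cards of members of a given type -/
def tS (tp : Bool) : List (Finset V × Bool) → ℕ
  | [] => 0
  | (X, t) :: l => (if t = tp then X.card else 0) + tS tp l

variable (pool : Finset V) (rT rF : V → V → Bool) (s' C : ℕ)

def GoodList : List (Finset V × Bool) → Prop
  | [] => True
  | (X, tp) :: l => GoodList l ∧ X.Nonempty ∧ X ⊆ pool \ memU l ∧ X.card ≤ s' ∧
      ((nbd ((pool \ memU l) \ X) (if tp then rT else rF) X).card ≤ C * X.card)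

variable {pool rT rF s' C}

lemma tU_subset_memU (tp : Bool) (l : List (Finset V × Bool)) : tU tp l ⊆ memU l := by
  induction l with
  | nil => exact Subset.rfl
  | cons hd tl ih =>
    obtain ⟨X, t⟩ := hd
    simp only [tU, memU]
    apply union_subset_union _ ih
    by_cases h : t = tp <;> simp [h]

lemma memU_subset_pool {l : List (Finset V × Bool)} (hl : GoodList pool rT rF s' C l) :
    memU l ⊆ pool := by
  induction l with
  | nil => simp [memU]
  | cons hd tl ih =>
    obtain ⟨X, t⟩ := hd
    obtain ⟨hgl, _, hX, _, _⟩ := hl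
    simp only [memU]
    exact union_subset ((subset_sdiff.1 hX).1) (ih hgl)

lemma memU_card_le (l : List (Finset V × Bool)) :
    (memU l).card ≤ tS true l + tS false l := by
  induction l with
  | nil => simp [memU, tS]
  | cons hd tl ih =>
    obtain ⟨X, t⟩ := hd
    simp only [memU, tS]
    calc (X ∪ memU tl).card ≤ X.card + (memU tl).card := card_union_le _ _
    _ ≤ X.card + (tS true tl + tS false tl) := by omega
    _ ≤ _ := by cases t <;> simp <;> omega

lemma tU_card {l : List (Finset V × Bool)} (hl : GoodList pool rT rF s' C l) (tp : Bool) :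
    tS tp l ≤ (tU tp l).card := by
  induction l with
  | nil => simp [tU, tS]
  | cons hd tl ih =>
    obtain ⟨X, t⟩ := hd
    obtain ⟨hgl, _, hX, _, _⟩ := hl
    have hdisj : Disjoint X (tU tp tl) :=
      Finset.disjoint_of_subset_right (tU_subset_memU tp tl) (subset_sdiff.1 hX).2
    simp only [tU, tS]
    by_cases h : t = tp
    · simp only [h, if_true]
      rw [card_union_of_disjoint hdisj]
      have := ih hgl
      omega
    · simp only [h, if_false]
      have := ih hgl
      simp only [empty_union]
      omega

lemma tU_subset_pool {l : List (Finset V × Bool)} (hl : GoodList pool rT rF s' C l)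
    (tp : Bool) : tU tp l ⊆ pool :=
  (tU_subset_memU tp l).trans (memU_subset_pool hl)

end Blocker

namespace Blocker

variable {pool base : Finset V} {rT rF : V → V → Bool} {s' C : ℕ}

lemma tU_card_le (tp : Bool) (l : List (Finset V × Bool)) :
    (tU tp l).card ≤ tS tp l := by
  induction l with
  | nil => simp [tU, tS]
  | cons hd tl ih =>
    obtain ⟨X, t⟩ := hd
    simp only [tU, tS]
    calc ((if t = tp then X else ∅) ∪ tU tp tl).card
        ≤ (if t = tp then X else ∅).card + (tU tp tl).card := card_union_le _ _
      _ ≤ (if t = tp then X.card else 0) + tS tp tl := by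
          by_cases h : t = tp <;> simp [h] <;> omega

lemma nbd_tU_bound {l : List (Finset V × Bool)} (hl : GoodList pool rT rF s' C l)
    (hpb : pool ⊆ base) (tp : Bool) {M : Finset V} (hM : memU l ⊆ M) :
    ((nbd base (if tp then rT else rF) (tU tp l)) \ ((base \ pool) ∪ M)).card
      ≤ C * tS tp l := by
  induction l with
  | nil => simp [tU, tS, nbd, filter_eq_empty_iff]
  | cons hd tl ih =>
    obtain ⟨X, t⟩ := hd
    obtain ⟨hgl, hne, hX, hcard, hweak⟩ := hl
    have hM2 : X ∪ memU tl ⊆ M := hM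
    have hXM : X ⊆ M := subset_union_left.trans hM2
    have hM' : memU tl ⊆ M := subset_union_right.trans hM2
    simp only [tU, tS]
    by_cases h : t = tp
    · simp only [h, if_true]
      rw [nbd_union]
      have hsplit : (nbd base (if tp then rT else rF) X ∪
            nbd base (if tp then rT else rF) (tU tp tl)) \ ((base \ pool) ∪ M)
          ⊆ ((nbd base (if tp then rT else rF) X) \ ((base \ pool) ∪ M)) ∪
            ((nbd base (if tp then rT else rF) (tU tp tl)) \ ((base \ pool) ∪ M)) := by
        intro y hy
        rw [mem_sdiff, mem_union] at hy
        rcases hy.1 with hy1 | hy1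
        · exact mem_union_left _ (mem_sdiff.2 ⟨hy1, hy.2⟩)
        · exact mem_union_right _ (mem_sdiff.2 ⟨hy1, hy.2⟩)
      have hhead : (nbd base (if tp then rT else rF) X) \ ((base \ pool) ∪ M)
          ⊆ nbd ((pool \ memU tl) \ X) (if tp then rT else rF) X := by
        intro y hy
        rw [mem_sdiff, mem_nbd] at hy
        obtain ⟨⟨hyb, hrel⟩, hyG⟩ := hy
        have hyp : y ∈ pool := by
          by_contra hc
          exact hyG (mem_union_left _ (mem_sdiff.2 ⟨hyb, hc⟩))
        have hyM : y ∉ M := fun hc => hyG (mem_union_right _ hc)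
        rw [mem_nbd]
        refine ⟨?_, hrel⟩
        rw [mem_sdiff, mem_sdiff]
        exact ⟨⟨hyp, fun hc => hyM (hM' hc)⟩, fun hc => hyM (hXM hc)⟩
      calc ((nbd base (if tp then rT else rF) X ∪
            nbd base (if tp then rT else rF) (tU tp tl)) \ ((base \ pool) ∪ M)).card
          ≤ _ := card_le_card hsplit
        _ ≤ ((nbd base (if tp then rT else rF) X) \ ((base \ pool) ∪ M)).card +
            ((nbd base (if tp then rT else rF) (tU tp tl)) \ ((base \ pool) ∪ M)).card :=
            card_union_le _ _
        _ ≤ C * X.card + C * tS tp tl := by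
            have h1 := card_le_card hhead
            have h2 := ih hgl hM'
            have h3 := hweak
            rw [h] at h3
            omega
        _ = C * (X.card + tS tp tl) := by ring
      -- rewrite if
      
    · simp only [h, if_false, empty_union, zero_add]
      exact ih hgl hM'

end Blocker

namespace Blocker

variable {pool base : Finset V} {rT rF : V → V → Bool} {s' C : ℕ}

lemma key_step {bigN : ℕ} (hpb : pool ⊆ base) (hs : 1 ≤ s')
    (hexp : ∀ (tp : Bool) (P : Finset V), P ⊆ pool → s' ≤ P.card → P.card ≤ 2 * s' →
      bigN ≤ (nbd base (if tp then rT else rF) P).card)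
    (hnum : C * (2 * s') + 3 * s' + (base \ pool).card < bigN)
    {X : Finset V} {tp : Bool} {tl : List (Finset V × Bool)}
    (hGL : GoodList pool rT rF s' C ((X, tp) :: tl))
    (h1 : tS true tl < s') (h2 : tS false tl < s') :
    tS tp ((X, tp) :: tl) < s' := by
  by_contra hcon
  push_neg at hcon
  set L := (X, tp) :: tl with hLdef
  have hcard : X.card ≤ s' := hGL.2.2.2.1
  have htt : tS tp L = X.card + tS tp tl := by simp [hLdef, tS]
  have htpl : tS tp tl < s' := by
    cases tp
    · exact h2
    · exact h1
  have hP2 : tS tp L ≤ 2 * s' := by omega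
  have hPge : tS tp L ≤ (tU tp L).card := tU_card hGL tp
  have hPle : (tU tp L).card ≤ tS tp L := tU_card_le tp L
  have hbig := hexp tp (tU tp L) (tU_subset_pool hGL tp) (by omega) (by omega)
  have hbound := nbd_tU_bound hGL hpb tp (M := memU L) Subset.rfl
  have hsd := card_le_card_sdiff_add_card
    (s := nbd base (if tp then rT else rF) (tU tp L)) (t := (base \ pool) ∪ memU L)
  have hG := card_union_le (base \ pool) (memU L)
  have hmem := memU_card_le L
  have hsum : tS true L + tS false L ≤ 3 * s' := by
    have e1 : tS true L = (if tp = true then X.card else 0) + tS true tl := by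
      simp [hLdef, tS]
    have e2 : tS false L = (if tp = false then X.card else 0) + tS false tl := by
      simp [hLdef, tS]
    cases tp <;> simp at e1 e2 <;> omega
  have hCmul : C * tS tp L ≤ C * (2 * s') := Nat.mul_le_mul_left _ hP2
  have hCb : C * tS tp L ≥ (nbd base (if tp then rT else rF) (tU tp L) \
      ((base \ pool) ∪ memU L)).card := hbound
  omega

lemma goodList_tS {bigN : ℕ} (hpb : pool ⊆ base) (hs : 1 ≤ s')
    (hexp : ∀ (tp : Bool) (P : Finset V), P ⊆ pool → s' ≤ P.card → P.card ≤ 2 * s' →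
      bigN ≤ (nbd base (if tp then rT else rF) P).card)
    (hnum : C * (2 * s') + 3 * s' + (base \ pool).card < bigN)
    {l : List (Finset V × Bool)} (hl : GoodList pool rT rF s' C l) :
    tS true l < s' ∧ tS false l < s' := by
  induction l with
  | nil => refine ⟨?_, ?_⟩ <;> simp [tS] <;> omega
  | cons hd tl ih =>
    obtain ⟨X, t⟩ := hd
    have hgl : GoodList pool rT rF s' C tl := hl.1
    obtain ⟨ih1, ih2⟩ := ih hgl
    have hkey := key_step hpb hs hexp hnum hl ih1 ih2
    constructor
    · cases t
      · simpa [tS] using ih1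
      · exact hkey
    · cases t
      · exact hkey
      · simpa [tS] using ih2

lemma exists_blocker {bigN : ℕ} (hpb : pool ⊆ base) (hs : 1 ≤ s')
    (hexp : ∀ (tp : Bool) (P : Finset V), P ⊆ pool → s' ≤ P.card → P.card ≤ 2 * s' →
      bigN ≤ (nbd base (if tp then rT else rF) P).card)
    (hnum : C * (2 * s') + 3 * s' + (base \ pool).card < bigN) :
    ∃ B ⊆ pool, B.card ≤ 2 * s' ∧ ∀ tp : Bool, ∀ X ⊆ pool \ B, X.Nonempty → X.card ≤ s' →
      C * X.card < (nbd ((pool \ B) \ X) (if tp then rT else rF) X).card := by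
  classical
  set Cand := (pool.powerset).filter
    (fun B => ∃ l, GoodList pool rT rF s' C l ∧ memU l = B) with hCand
  have hne : Cand.Nonempty := by
    refine ⟨∅, ?_⟩
    rw [hCand, mem_filter, mem_powerset]
    exact ⟨empty_subset _, [], trivial, rfl⟩
  obtain ⟨B, hBmem, hBmax⟩ := Finset.exists_max_image Cand (fun B => B.card) hne
  rw [hCand, mem_filter, mem_powerset] at hBmem
  obtain ⟨hBpool, l, hGL, hUl⟩ := hBmem
  refine ⟨B, hBpool, ?_, ?_⟩
  · obtain ⟨g1, g2⟩ := goodList_tS hpb hs hexp hnum hGL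
    have h2 := memU_card_le l
    rw [hUl] at h2
    omega
  · intro tp X hX hXne hXcard
    by_contra hcon
    push_neg at hcon
    have hGL' : GoodList pool rT rF s' C ((X, tp) :: l) := by
      refine ⟨hGL, hXne, by rw [hUl]; exact hX, hXcard, by rw [hUl]; exact hcon⟩
    have hmem' : (X ∪ B) ∈ Cand := by
      rw [hCand, mem_filter, mem_powerset]
      refine ⟨union_subset ((subset_sdiff.mp hX).1) hBpool, (X, tp) :: l, hGL', ?_⟩
      simp only [memU, hUl]
    have hle := hBmax _ hmem'
    have hdisj : Disjoint X B := (subset_sdiff.mp hX).2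
    rw [card_union_of_disjoint hdisj] at hle
    have := hXne.card_pos
    omega

end Blocker



lemma minsum_le (s' : ℕ) (m : ℕ) :
    (∑ j ∈ Finset.range m, min (2 ^ j) s') ≤ 2 ^ m - 1 ∧
    (∑ j ∈ Finset.range m, min (2 ^ j) s') ≤ m * s' := by
  induction m with
  | zero => simp
  | succ m ih =>
    rw [Finset.sum_range_succ]
    have h1 : (1:ℕ) ≤ 2 ^ m := Nat.one_le_two_pow
    have h2 : (1:ℕ) ≤ 2 ^ (m+1) := Nat.one_le_two_pow
    have hmin1 : min (2 ^ m) s' ≤ 2 ^ m := Nat.min_le_left _ _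
    have hmin2 : min (2 ^ m) s' ≤ s' := Nat.min_le_right _ _
    have hpow : 2 ^ (m + 1) = 2 * 2 ^ m := by ring
    constructor
    · omega
    · have : (m + 1) * s' = m * s' + s' := by ring
      omega

lemma grow_chain (pool : Finset V) (rel : ℕ → V → V → Bool) (s' C : ℕ)
    (hs : 1 ≤ s') (hC : 4 ≤ C)
    (hB : ∀ j (X : Finset V), X ⊆ pool → X.Nonempty → X.card ≤ s' →
      C * X.card < (nbd (pool \ X) (rel j) X).card)
    (x0 : V) (hx0 : x0 ∈ pool) :
    ∀ k, k + 4 ≤ C →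
      ∃ F : ℕ → Finset V, F 0 = {x0} ∧
        (∀ j, j ≤ k → F j ⊆ pool) ∧
        (∀ j, j ≤ k → (F j).card = min (2 ^ j) s') ∧
        (∀ j, j < k → ∀ y ∈ F (j+1), ∃ x ∈ F j, rel j x y = true) ∧
        (∀ i j, i ≤ k → j ≤ k → i ≠ j → Disjoint (F i) (F j)) := by
  intro k
  induction k with
  | zero =>
    intro _
    refine ⟨fun _ => {x0}, rfl, ?_, ?_, ?_, ?_⟩
    · intro j hj
      simpa using hx0
    · intro j hj
      interval_cases j
      simp [hs]
    · intro j hj; omega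
    · intro i j hi hj hij; omega
  | succ k ih =>
    intro hkC
    obtain ⟨F, hF0, hsub, hcard, hstep, hdisj⟩ := ih (by omega)
    set U := (Finset.range (k+1)).biUnion F with hU
    have hUcard : U.card ≤ ∑ j ∈ Finset.range (k+1), min (2 ^ j) s' := by
      calc U.card ≤ ∑ j ∈ Finset.range (k+1), (F j).card := card_biUnion_le
        _ = ∑ j ∈ Finset.range (k+1), min (2 ^ j) s' := by
            apply Finset.sum_congr rfl
            intro j hj
            exact hcard j (by simp at hj; omega)
    have hFk : F k ⊆ pool := hsub k le_rfl
    have hFkcard : (F k).card = min (2 ^ k) s' := hcard k le_rfl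
    have hFkne : (F k).Nonempty := by
      rw [← card_pos, hFkcard]
      have : (1:ℕ) ≤ 2 ^ k := Nat.one_le_two_pow
      omega
    have hbig := hB k (F k) hFk hFkne (by rw [hFkcard]; exact Nat.min_le_right _ _)
    set N := nbd (pool \ F k) (rel k) (F k) with hN
    -- enough room
    have hroom : min (2 ^ (k+1)) s' + U.card ≤ C * (F k).card := by
      obtain ⟨hm1, hm2⟩ := minsum_le s' (k+1)
      rw [hFkcard]
      by_cases hcase : 2 ^ k < s'
      · rw [show min (2 ^ k) s' = 2 ^ k by omega]
        have e2 : min (2 ^ (k+1)) s' ≤ 2 ^ (k+1) := Nat.min_le_left _ _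
        have hCk : 4 * 2 ^ k ≤ C * 2 ^ k := Nat.mul_le_mul_right _ hC
        have hpow : (2:ℕ) ^ (k + 1) = 2 * 2 ^ k := by ring
        omega
      · rw [show min (2 ^ k) s' = s' by omega]
        have hle : (2:ℕ) ^ k ≤ 2 ^ (k+1) := Nat.pow_le_pow_right (by norm_num) (by omega)
        rw [show min (2 ^ (k+1)) s' = s' by omega]
        have h3 : (k + 2) * s' ≤ C * s' := Nat.mul_le_mul_right _ (by omega)
        have h4 : (k + 2) * s' = (k + 1) * s' + s' := by ring
        omega
    have havail : min (2 ^ (k+1)) s' ≤ (N \ U).card := by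
      have h1 : N.card ≤ (N \ U).card + U.card := card_le_card_sdiff_add_card
      omega
    obtain ⟨F', hF'sub, hF'card⟩ := Finset.exists_subset_card_eq havail
    refine ⟨Function.update F (k+1) F', ?_, ?_, ?_, ?_, ?_⟩
    · rw [Function.update_of_ne (by omega : (0:ℕ) ≠ k + 1)]
      exact hF0
    · intro j hj
      by_cases h : j = k + 1
      · subst h
        rw [Function.update_self]
        refine hF'sub.trans (fun y hy => ?_)
        have h1 : y ∈ N := sdiff_subset hy
        have h2 : y ∈ pool \ F (k + 1 - 1) := by
          rw [hN, nbd] at h1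
          simpa using (filter_subset _ _ h1)
        exact sdiff_subset h2
      · rw [Function.update_of_ne h]
        exact hsub j (by omega)
    · intro j hj
      by_cases h : j = k + 1
      · subst h
        rw [Function.update_self]
        exact hF'card
      · rw [Function.update_of_ne h]
        exact hcard j (by omega)
    · intro j hj y hy
      by_cases h : j = k
      · subst h
        rw [Function.update_self] at hy
        rw [Function.update_of_ne (by omega : j ≠ j + 1)]
        have hyN : y ∈ N := sdiff_subset (hF'sub hy)
        rw [hN, nbd, mem_filter] at hyN
        exact hyN.2
      · rw [Function.update_of_ne (by omega : j + 1 ≠ k + 1)] at hy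
        rw [Function.update_of_ne (by omega : j ≠ k + 1)]
        exact hstep j (by omega) y hy
    · intro i j hi hj hij
      have hUsub : ∀ m, m ≤ k → F m ⊆ U := by
        intro m hm
        rw [hU]
        exact subset_biUnion_of_mem F (mem_range.2 (by omega))
      by_cases h1 : i = k + 1
      · subst h1
        rw [Function.update_self, Function.update_of_ne (by omega : j ≠ k + 1)]
        rw [disjoint_left]
        intro x hx hxj
        exact (mem_sdiff.1 (hF'sub hx)).2 (hUsub j (by omega) hxj)
      · by_cases h2 : j = k + 1
        · subst h2
          rw [Function.update_of_ne h1, Function.update_self]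
          rw [disjoint_right]
          intro x hx hxi
          exact (mem_sdiff.1 (hF'sub hx)).2 (hUsub i (by omega) hxi)
        · rw [Function.update_of_ne h1, Function.update_of_ne h2]
          exact hdisj i j (by omega) (by omega) hij

lemma chain_extract (F : ℕ → Finset V) (rel : ℕ → V → V → Bool) (k : ℕ)
    (hstep : ∀ j, j < k → ∀ y ∈ F (j+1), ∃ x ∈ F j, rel j x y = true) :
    ∀ j, j ≤ k → ∀ y ∈ F j, ∃ w : ℕ → V, w j = y ∧ (∀ i, i ≤ j → w i ∈ F i) ∧
      ∀ i, i < j → rel i (w i) (w (i+1)) = true := by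
  intro j
  induction j with
  | zero =>
    intro _ y hy
    refine ⟨fun _ => y, rfl, ?_, ?_⟩
    · intro i hi
      have hi0 : i = 0 := by omega
      subst hi0
      exact hy
    · intro i hi
      exact absurd hi (by omega)
  | succ j ihj =>
    intro hj y hy
    obtain ⟨x, hx, hrel⟩ := hstep j (by omega) y hy
    obtain ⟨w, hwj, hwmem, hwrel⟩ := ihj (by omega) x hx
    refine ⟨Function.update w (j+1) y, Function.update_self _ _ _, ?_, ?_⟩
    · intro i hi
      by_cases h : i = j + 1
      · subst h
        rw [Function.update_self]
        exact hy
      · rw [Function.update_of_ne h]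
        exact hwmem i (by omega)
    · intro i hi
      by_cases h : i = j
      · subst h
        rw [Function.update_of_ne (by omega : i ≠ i + 1), Function.update_self, hwj]
        exact hrel
      · rw [Function.update_of_ne (by omega : i ≠ j + 1),
          Function.update_of_ne (by omega : i + 1 ≠ j + 1)]
        exact hwrel i (by omega)

section RoundCore

variable {V : Type*} [Fintype V] [DecidableEq V] {ι : Type*} [Fintype ι] [DecidableEq ι]

def rOut (D : V → V → Bool) : V → V → Bool := fun x y => D x y
def rIn (D : V → V → Bool) : V → V → Bool := fun x y => D y x
def sg (D : V → V → Bool) (t : Bool) : V → V → Bool := if t then rOut D else rIn D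
def sgB (D : V → V → Bool) (t : Bool) : V → V → Bool := if t then rIn D else rOut D

lemma sg_apply (D : V → V → Bool) (t : Bool) (x y : V) :
    sg D t x y = (if t then D x y else D y x) := by cases t <;> rfl

lemma sgB_apply (D : V → V → Bool) (t : Bool) (x y : V) :
    sgB D t x y = (if t then D y x else D x y) := by cases t <;> rfl

lemma sgB_eq_sg (D : V → V → Bool) (t : Bool) : sgB D t = sg D (!t) := by cases t <;> rfl

lemma dead_small (r : V → V → Bool) (base pool' : Finset V) (f : ι → V)
    (hinj : Function.Injective f) (J : Finset ι) (s' bigN : ℕ) (hs : 1 ≤ s')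
    (hexp : ∀ S : Finset V, S ⊆ Finset.image f Finset.univ → s' ≤ S.card →
      bigN ≤ (nbd base r S).card)
    (hsize : (base \ pool').card < bigN) :
    (J.filter (fun i => nbd pool' r {f i} = ∅)).card < s' := by
  by_contra hcon
  push_neg at hcon
  obtain ⟨Sd, hsub, hcard⟩ := Finset.exists_subset_card_eq hcon
  have hScard : (Sd.image f).card = s' := by rw [Finset.card_image_of_injective _ hinj, hcard]
  have hSsub : Sd.image f ⊆ Finset.image f Finset.univ :=
    Finset.image_subset_image (Finset.subset_univ _)
  have hbig := hexp (Sd.image f) hSsub (le_of_eq hScard.symm)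
  have hsubset : nbd base r (Sd.image f) ⊆ base \ pool' := by
    intro y hy
    rw [mem_nbd] at hy
    obtain ⟨hyb, x, hxS, hr⟩ := hy
    obtain ⟨i0, hi0, rfl⟩ := Finset.mem_image.1 hxS
    have hdead : nbd pool' r {f i0} = ∅ := (Finset.mem_filter.1 (hsub hi0)).2
    rw [mem_sdiff]
    refine ⟨hyb, fun hyp => ?_⟩
    have : y ∈ nbd pool' r {f i0} := mem_nbd.2 ⟨hyp, f i0, Finset.mem_singleton_self _, hr⟩
    rw [hdead] at this
    exact absurd this (Finset.notMem_empty y)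
  have := card_le_card hsubset
  omega

lemma round_core (D : V → V → Bool) (RA RB U : Finset V) (hdisjAB : Disjoint RA RB)
    (a b : ι → V) (ha : Function.Injective a) (hb : Function.Injective b)
    (σ' : ℕ → Bool) (ℓ s' kf kb bigA bigB : ℕ)
    (hs : 1 ≤ s')
    (hkfb : kf + kb + 2 = ℓ) (hkf1 : 1 ≤ kf) (hkb1 : 1 ≤ kb)
    (hcapf : s' ≤ 2 ^ (kf - 1)) (hcapb : s' ≤ 2 ^ (kb - 1))
    (J : Finset ι) (hJcard : 2 * s' - 1 ≤ J.card)
    (hexpA : ∀ (tp : Bool) (S : Finset V),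
      S ⊆ RA ∪ RB ∪ (Finset.image a Finset.univ ∪ Finset.image b Finset.univ) →
      s' ≤ S.card → bigA ≤ (nbd RA (sg D tp) S).card)
    (hexpB : ∀ (tp : Bool) (S : Finset V),
      S ⊆ RA ∪ RB ∪ (Finset.image a Finset.univ ∪ Finset.image b Finset.univ) →
      s' ≤ S.card → bigB ≤ (nbd RB (sg D tp) S).card)
    (hn1A : (ℓ + 2) * (2 * s') + 3 * s' + U.card < bigA)
    (hn1B : (ℓ + 2) * (2 * s') + 3 * s' + U.card < bigB)
    (hn3 : RA.card + 2 * U.card + 2 * (ℓ * s') < 2 * bigA) :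
    ∃ i ∈ J, ∃ w : ℕ → V,
      w 0 = a i ∧ w ℓ = b i ∧
      (∀ j, 1 ≤ j → j ≤ ℓ - 1 → w j ∈ (RA ∪ RB) \ U) ∧
      (∀ p, p < ℓ → (if σ' p then D (w p) (w (p+1)) else D (w (p+1)) (w p)) = true) ∧
      (∀ j j', 1 ≤ j → j < j' → j' ≤ ℓ - 1 → w j ≠ w j') := by
  classical
  set allowed := RA ∪ RB ∪ (Finset.image a Finset.univ ∪ Finset.image b Finset.univ)
    with hallowed
  have hRAallowed : RA ⊆ allowed := (subset_union_left).trans subset_union_left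
  have hRBallowed : RB ⊆ allowed := (subset_union_right).trans subset_union_left
  set C := ℓ + 2 with hC
  have hl4 : 4 ≤ ℓ := by omega
  set poolA := RA \ U with hpoolA
  set poolB := RB \ U with hpoolB
  have hpoolAsub : poolA ⊆ RA := sdiff_subset
  have hpoolBsub : poolB ⊆ RB := sdiff_subset
  have hdiffA : (RA \ poolA).card ≤ U.card := by
    apply card_le_card
    intro y hy
    rw [mem_sdiff, hpoolA, mem_sdiff] at hy
    by_contra hc
    exact hy.2 ⟨hy.1, hc⟩
  have hdiffB : (RB \ poolB).card ≤ U.card := by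
    apply card_le_card
    intro y hy
    rw [mem_sdiff, hpoolB, mem_sdiff] at hy
    by_contra hc
    exact hy.2 ⟨hy.1, hc⟩
  have h2s : 2 * s' ≤ (ℓ + 2) * (2 * s') := Nat.le_mul_of_pos_left _ (by omega)
  -- blockers
  obtain ⟨BA, hBAsub, hBAcard, hblockA⟩ := Blocker.exists_blocker (pool := poolA)
    (base := RA) (rT := rOut D) (rF := rIn D) (s' := s') (C := C) (bigN := bigA)
    hpoolAsub hs
    (fun tp P hP h1 _ => hexpA tp P ((hP.trans hpoolAsub).trans hRAallowed) h1)
    (by omega)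
  obtain ⟨BB, hBBsub, hBBcard, hblockB⟩ := Blocker.exists_blocker (pool := poolB)
    (base := RB) (rT := rOut D) (rF := rIn D) (s' := s') (C := C) (bigN := bigB)
    hpoolBsub hs
    (fun tp P hP h1 _ => hexpB tp P ((hP.trans hpoolBsub).trans hRBallowed) h1)
    (by omega)
  set poolA' := poolA \ BA with hpoolA'
  set poolB' := poolB \ BB with hpoolB'
  have hpoolA'RA : poolA' ⊆ RA := sdiff_subset.trans hpoolAsub
  have hpoolB'RB : poolB' ⊆ RB := sdiff_subset.trans hpoolBsub
  have hdiffA' : (RA \ poolA').card < bigA := by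
    have hsub : RA \ poolA' ⊆ (RA \ poolA) ∪ BA := by
      intro y hy
      rw [mem_sdiff] at hy
      by_cases hyB : y ∈ BA
      · exact mem_union_right _ hyB
      · refine mem_union_left _ (mem_sdiff.2 ⟨hy.1, fun hyp => ?_⟩)
        exact hy.2 (by rw [hpoolA', mem_sdiff]; exact ⟨hyp, hyB⟩)
    have h1 := card_le_card hsub
    have h2 := card_union_le (RA \ poolA) BA
    omega
  have hdiffB' : (RB \ poolB').card < bigB := by
    have hsub : RB \ poolB' ⊆ (RB \ poolB) ∪ BB := by
      intro y hy
      rw [mem_sdiff] at hy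
      by_cases hyB : y ∈ BB
      · exact mem_union_right _ hyB
      · refine mem_union_left _ (mem_sdiff.2 ⟨hy.1, fun hyp => ?_⟩)
        exact hy.2 (by rw [hpoolB', mem_sdiff]; exact ⟨hyp, hyB⟩)
    have h1 := card_le_card hsub
    have h2 := card_union_le (RB \ poolB) BB
    omega
  -- dead counting
  have hdeadA : (J.filter (fun i => nbd poolA' (sg D (σ' 0)) {a i} = ∅)).card < s' := by
    refine dead_small _ RA poolA' a ha J s' bigA hs (fun S hS h1 => ?_) hdiffA'
    exact hexpA (σ' 0) S (hS.trans ((subset_union_left).trans subset_union_right)) h1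
  have hdeadB : (J.filter (fun i =>
      nbd poolB' (sgB D (σ' (ℓ - 1))) {b i} = ∅)).card < s' := by
    refine dead_small _ RB poolB' b hb J s' bigB hs (fun S hS h1 => ?_) hdiffB'
    rw [sgB_eq_sg]
    exact hexpB (!(σ' (ℓ - 1))) S
      (hS.trans ((subset_union_right).trans subset_union_right)) h1
  -- pick a live index
  set deadA := J.filter (fun i => nbd poolA' (sg D (σ' 0)) {a i} = ∅) with hdA
  set deadB := J.filter (fun i => nbd poolB' (sgB D (σ' (ℓ - 1))) {b i} = ∅) with hdB
  have hlive : ((J \ deadA) \ deadB).Nonempty := by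
    rw [← card_pos]
    have h1 : J.card ≤ (J \ deadA).card + deadA.card := card_le_card_sdiff_add_card
    have h2 : (J \ deadA).card ≤ ((J \ deadA) \ deadB).card + deadB.card :=
      card_le_card_sdiff_add_card
    omega
  obtain ⟨i, hi⟩ := hlive
  rw [mem_sdiff, mem_sdiff] at hi
  obtain ⟨⟨hiJ, hiA⟩, hiB⟩ := hi
  have hx1ex : (nbd poolA' (sg D (σ' 0)) {a i}).Nonempty := by
    rw [Finset.nonempty_iff_ne_empty]
    intro hc
    exact hiA (by rw [hdA, Finset.mem_filter]; exact ⟨hiJ, hc⟩)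
  obtain ⟨x1, hx1⟩ := hx1ex
  have hu1ex : (nbd poolB' (sgB D (σ' (ℓ - 1))) {b i}).Nonempty := by
    rw [Finset.nonempty_iff_ne_empty]
    intro hc
    exact hiB (by rw [hdB, Finset.mem_filter]; exact ⟨hiJ, hc⟩)
  obtain ⟨u1, hu1⟩ := hu1ex
  refine ⟨i, hiJ, ?_⟩
  -- forward chain
  have hx1pool : x1 ∈ poolA' := nbd_subset _ _ _ hx1
  have hBchainF : ∀ c (X : Finset V), X ⊆ poolA' → X.Nonempty → X.card ≤ s' →
      C * X.card < (nbd (poolA' \ X) ((fun c => sg D (σ' (c+1))) c) X).card := by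
    intro c X hX hne hc
    exact hblockA (σ' (c+1)) X hX hne hc
  obtain ⟨Ff, hFf0, hFfsub, hFfcard, hFfstep, hFfdisj⟩ :=
    grow_chain poolA' (fun c => sg D (σ' (c+1))) s' C hs (by omega) hBchainF x1 hx1pool
      (kf - 1) (by omega)
  have hBchainB : ∀ c (X : Finset V), X ⊆ poolB' → X.Nonempty → X.card ≤ s' →
      C * X.card < (nbd (poolB' \ X) ((fun c => sgB D (σ' (ℓ - 2 - c))) c) X).card := by
    intro c X hX hne hc
    show C * X.card < (nbd (poolB' \ X) (sgB D (σ' (ℓ - 2 - c))) X).card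
    rw [sgB_eq_sg]
    cases hσ : σ' (ℓ - 2 - c)
    · exact hblockB true X hX hne hc
    · exact hblockB false X hX hne hc
  obtain ⟨Gb, hGb0, hGbsub, hGbcard, hGbstep, hGbdisj⟩ :=
    grow_chain poolB' (fun c => sgB D (σ' (ℓ - 2 - c))) s' C hs (by omega) hBchainB u1
      (nbd_subset _ _ _ hu1) (kb - 1) (by omega)
  have hFlastcard : (Ff (kf - 1)).card = s' := by
    have h := hFfcard (kf - 1) le_rfl
    omega
  have hGlastcard : (Gb (kb - 1)).card = s' := by
    have h := hGbcard (kb - 1) le_rfl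
    omega
  -- footprint and meeting pools
  set ΦF := (Finset.range kf).biUnion Ff with hΦF
  have hΦFcard : ΦF.card ≤ kf * s' := by
    calc ΦF.card ≤ ∑ j ∈ Finset.range kf, (Ff j).card := card_biUnion_le
      _ ≤ ∑ j ∈ Finset.range kf, s' := by
          refine Finset.sum_le_sum (fun j hj => ?_)
          have h := hFfcard j (by rw [Finset.mem_range] at hj; omega)
          omega
      _ = kf * s' := by rw [Finset.sum_const, Finset.card_range, smul_eq_mul]
  have hΦFsub : ∀ c, c ≤ kf - 1 → Ff c ⊆ ΦF := by
    intro c hc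
    rw [hΦF]
    exact subset_biUnion_of_mem Ff (Finset.mem_range.2 (by omega))
  set poolv := poolA \ ΦF with hpoolv
  have hpoolvRA : poolv ⊆ RA := sdiff_subset.trans hpoolAsub
  have hdiffv : (RA \ poolv).card ≤ U.card + kf * s' := by
    have hsub : RA \ poolv ⊆ (RA \ poolA) ∪ ΦF := by
      intro y hy
      rw [mem_sdiff] at hy
      by_cases hyB : y ∈ ΦF
      · exact mem_union_right _ hyB
      · refine mem_union_left _ (mem_sdiff.2 ⟨hy.1, fun hyp => ?_⟩)
        exact hy.2 (by rw [hpoolv, mem_sdiff]; exact ⟨hyp, hyB⟩)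
    have h1 := card_le_card hsub
    have h2 := card_union_le (RA \ poolA) ΦF
    omega
  set Fbig := nbd poolv (sg D (σ' kf)) (Ff (kf - 1)) with hFbig
  set Gbig := nbd poolv (sgB D (σ' (kf + 1))) (Gb (kb - 1)) with hGbig
  have hFbigcard : bigA ≤ Fbig.card + (U.card + kf * s') := by
    have hexp1 := hexpA (σ' kf) (Ff (kf - 1))
      ((hFfsub (kf - 1) le_rfl).trans (hpoolA'RA.trans hRAallowed))
      (le_of_eq hFlastcard.symm)
    have hsplit := card_le_card (nbd_pool_split hpoolvRA (sg D (σ' kf)) (Ff (kf - 1)))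
    have h3 := card_union_le (nbd poolv (sg D (σ' kf)) (Ff (kf - 1))) (RA \ poolv)
    rw [hFbig]
    omega
  have hGbigcard : bigA ≤ Gbig.card + (U.card + kf * s') := by
    have hexp1 : bigA ≤ (nbd RA (sgB D (σ' (kf + 1))) (Gb (kb - 1))).card := by
      rw [sgB_eq_sg]
      exact hexpA (!(σ' (kf + 1))) (Gb (kb - 1))
        ((hGbsub (kb - 1) le_rfl).trans (hpoolB'RB.trans hRBallowed))
        (le_of_eq hGlastcard.symm)
    have hsplit := card_le_card
      (nbd_pool_split hpoolvRA (sgB D (σ' (kf + 1))) (Gb (kb - 1)))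
    have h3 := card_union_le (nbd poolv (sgB D (σ' (kf + 1))) (Gb (kb - 1))) (RA \ poolv)
    rw [hGbig]
    omega
  have hmeet : (Fbig ∩ Gbig).Nonempty := by
    rw [← card_pos]
    have h1 := Finset.card_inter_add_card_union Fbig Gbig
    have h2 : (Fbig ∪ Gbig).card ≤ RA.card := by
      apply card_le_card
      refine union_subset ?_ ?_
      · exact (nbd_subset _ _ _).trans hpoolvRA
      · exact (nbd_subset _ _ _).trans hpoolvRA
    have hkfl : kf * s' ≤ ℓ * s' := Nat.mul_le_mul_right _ (by omega)
    omega
  obtain ⟨v, hv⟩ := hmeet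
  rw [mem_inter] at hv
  have hvpool : v ∈ poolv := nbd_subset _ _ _ hv.1
  obtain ⟨-, xp, hxp, hxprel⟩ := mem_nbd.1 hv.1
  obtain ⟨-, up, hup, huprel⟩ := mem_nbd.1 hv.2
  -- extract walks
  obtain ⟨wf, hwfend, hwfmem, hwfrel⟩ :=
    chain_extract Ff (fun c => sg D (σ' (c+1))) (kf - 1) hFfstep (kf - 1) le_rfl xp hxp
  obtain ⟨wb, hwbend, hwbmem, hwbrel⟩ :=
    chain_extract Gb (fun c => sgB D (σ' (ℓ - 2 - c))) (kb - 1) hGbstep (kb - 1) le_rfl up hup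
  have hwf0 : wf 0 = x1 := by
    have h := hwfmem 0 (by omega)
    rw [hFf0, Finset.mem_singleton] at h
    exact h
  have hwb0 : wb 0 = u1 := by
    have h := hwbmem 0 (by omega)
    rw [hGb0, Finset.mem_singleton] at h
    exact h
  obtain ⟨hx1p, xa, hxa, hx1rel⟩ := mem_nbd.1 hx1
  rw [Finset.mem_singleton] at hxa
  subst hxa
  obtain ⟨hu1p, xb, hxb, hu1rel⟩ := mem_nbd.1 hu1
  rw [Finset.mem_singleton] at hxb
  subst hxb
  -- the walk
  set w : ℕ → V := fun j => if j = 0 then a i else if j ≤ kf then wf (j - 1)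
    else if j = kf + 1 then v else if j ≤ ℓ - 1 then wb (ℓ - 1 - j) else b i with hwdef
  have hw0 : w 0 = a i := by
    simp only [hwdef, if_true]
  have hwmid : ∀ j, 1 ≤ j → j ≤ kf → w j = wf (j - 1) := by
    intro j h1 h2
    simp only [hwdef]
    rw [if_neg (by omega), if_pos h2]
  have hwv : w (kf + 1) = v := by
    simp only [hwdef, if_true]
    rw [if_neg (by omega), if_neg (by omega)]
  have hwback : ∀ j, kf + 2 ≤ j → j ≤ ℓ - 1 → w j = wb (ℓ - 1 - j) := by
    intro j h1 h2
    simp only [hwdef]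
    rw [if_neg (by omega), if_neg (by omega), if_neg (by omega), if_pos h2]
  have hwl : w ℓ = b i := by
    simp only [hwdef]
    rw [if_neg (by omega), if_neg (by omega), if_neg (by omega), if_neg (by omega)]
  have hmemF : ∀ j, 1 ≤ j → j ≤ kf → w j ∈ Ff (j - 1) := by
    intro j h1 h2
    rw [hwmid j h1 h2]
    exact hwfmem (j - 1) (by omega)
  have hmemB : ∀ j, kf + 2 ≤ j → j ≤ ℓ - 1 → w j ∈ Gb (ℓ - 1 - j) := by
    intro j h1 h2
    rw [hwback j h1 h2]
    exact hwbmem (ℓ - 1 - j) (by omega)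
  have hFfRA : ∀ c, c ≤ kf - 1 → Ff c ⊆ RA := fun c hc => (hFfsub c hc).trans hpoolA'RA
  have hGbRB : ∀ c, c ≤ kb - 1 → Gb c ⊆ RB := fun c hc => (hGbsub c hc).trans hpoolB'RB
  refine ⟨w, hw0, hwl, ?_, ?_, ?_⟩
  · -- interior membership
    intro j h1 h2
    by_cases c1 : j ≤ kf
    · have hm := hmemF j h1 c1
      have hmm : w j ∈ poolA' := hFfsub (j - 1) (by omega) hm
      rw [hpoolA', hpoolA] at hmm
      have h3 := mem_sdiff.1 (mem_sdiff.1 hmm).1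
      exact mem_sdiff.2 ⟨mem_union_left _ h3.1, h3.2⟩
    · by_cases c2 : j = kf + 1
      · subst c2
        rw [hwv]
        have hmm := hvpool
        rw [hpoolv, hpoolA] at hmm
        have h3 := mem_sdiff.1 (mem_sdiff.1 hmm).1
        exact mem_sdiff.2 ⟨mem_union_left _ h3.1, h3.2⟩
      · have hm := hmemB j (by omega) h2
        have hmm : w j ∈ poolB' := hGbsub (ℓ - 1 - j) (by omega) hm
        rw [hpoolB', hpoolB] at hmm
        have h3 := mem_sdiff.1 (mem_sdiff.1 hmm).1
        exact mem_sdiff.2 ⟨mem_union_right _ h3.1, h3.2⟩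
  · -- arcs
    intro p hp
    by_cases c0 : p = 0
    · subst c0
      rw [show (0:ℕ) + 1 = 1 from rfl, hw0, hwmid 1 le_rfl (by omega),
        show (1:ℕ) - 1 = 0 from rfl, hwf0]
      have h := hx1rel
      rw [sg_apply] at h
      exact h
    · by_cases c1 : p ≤ kf - 1
      · have h1 : 1 ≤ p := by omega
        rw [hwmid p h1 (by omega), hwmid (p + 1) (by omega) (by omega),
          show p + 1 - 1 = p from by omega]
        have harcF := hwfrel (p - 1) (by omega)
        simp only [sg_apply] at harcF
        rw [show p - 1 + 1 = p from by omega] at harcF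
        exact harcF
      · by_cases c2 : p = kf
        · subst c2
          rw [hwmid p (by omega) le_rfl, hwv, hwfend]
          have h := hxprel
          rw [sg_apply] at h
          exact h
        · by_cases c3 : p = kf + 1
          · subst c3
            rw [hwv, hwback (kf + 1 + 1) (by omega) (by omega),
              show ℓ - 1 - (kf + 1 + 1) = kb - 1 from by omega, hwbend]
            have h := huprel
            rw [sgB_apply] at h
            exact h
          · by_cases c4 : p ≤ ℓ - 2
            · have h1 : kf + 2 ≤ p := by omega
              rw [hwback p h1 (by omega), hwback (p + 1) (by omega) (by omega)]
              have harcB := hwbrel (ℓ - 2 - p) (by omega)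
              simp only [sgB_apply] at harcB
              rw [show ℓ - 2 - (ℓ - 2 - p) = p from by omega] at harcB
              rw [show ℓ - 1 - p = (ℓ - 2 - p) + 1 from by omega,
                show ℓ - 1 - (p + 1) = ℓ - 2 - p from by omega]
              exact harcB
            · have hpl : p = ℓ - 1 := by omega
              subst hpl
              rw [hwback (ℓ - 1) (by omega) le_rfl,
                show ℓ - 1 + 1 = ℓ from by omega, hwl,
                show ℓ - 1 - (ℓ - 1) = 0 from by omega, hwb0]
              have h := hu1rel
              rw [sgB_apply] at h
              exact h
  · -- interior injectivity
    intro j j' h1 hlt h2 heq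
    by_cases cj : j ≤ kf
    · have hmj := hmemF j h1 cj
      by_cases cj' : j' ≤ kf
      · have hmj' := hmemF j' (by omega) cj'
        have hd := hFfdisj (j - 1) (j' - 1) (by omega) (by omega) (by omega)
        have hthis : w j ∈ Ff (j' - 1) := by rw [heq]; exact hmj'
        exact (Finset.disjoint_left.1 hd hmj) hthis
      · by_cases cv' : j' = kf + 1
        · subst cv'
          rw [hwv] at heq
          have hvΦ : v ∉ ΦF := by
            have hh := hvpool
            rw [hpoolv] at hh
            exact (mem_sdiff.1 hh).2
          have hthis : v ∈ ΦF := by rw [← heq]; exact hΦFsub (j - 1) (by omega) hmj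
          exact hvΦ hthis
        · have hmj' := hmemB j' (by omega) h2
          have hA : w j ∈ RA := hFfRA (j - 1) (by omega) hmj
          have hB : w j' ∈ RB := hGbRB (ℓ - 1 - j') (by omega) hmj'
          have hthis : w j ∈ RB := by rw [heq]; exact hB
          exact (Finset.disjoint_left.1 hdisjAB hA) hthis
    · by_cases cv : j = kf + 1
      · subst cv
        have hmj' := hmemB j' (by omega) h2
        rw [hwv] at heq
        have hA : v ∈ RA := hpoolvRA hvpool
        have hB : w j' ∈ RB := hGbRB (ℓ - 1 - j') (by omega) hmj'
        have hthis : v ∈ RB := by rw [heq]; exact hB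
        exact (Finset.disjoint_left.1 hdisjAB hA) hthis
      · have hmj := hmemB j (by omega) (by omega)
        have hmj' := hmemB j' (by omega) h2
        have hd := hGbdisj (ℓ - 1 - j) (ℓ - 1 - j') (by omega) (by omega) (by omega)
        have hthis : w j ∈ Gb (ℓ - 1 - j') := by rw [heq]; exact hmj'
        exact (Finset.disjoint_left.1 hd hmj) hthis

end RoundCore

open Filter

def outDeg {n : ℕ} (D : Fin n → Fin n → Bool) (v : Fin n) (S : Finset (Fin n)) : ℕ :=
  (S.filter fun w => D v w = true).card

def inDeg {n : ℕ} (D : Fin n → Fin n → Bool) (v : Fin n) (S : Finset (Fin n)) : ℕ :=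
  (S.filter fun w => D w v = true).card

def arcsIn {n : ℕ} (D : Fin n → Fin n → Bool) (X : Finset (Fin n)) : ℕ :=
  ((X ×ˢ X).filter fun e => D e.1 e.2 = true).card

def arcsBetween {n : ℕ} (D : Fin n → Fin n → Bool) (X Y : Finset (Fin n)) : ℕ :=
  ((X ×ˢ Y).filter fun e => D e.1 e.2 = true).card

/-- An `(n, α, p)`-pseudorandom digraph, as in Definition 3.1 of the paper. -/
def IsPseudorandom (n : ℕ) (α p : ℝ) (D : Fin n → Fin n → Bool) : Prop :=
  (∀ v : Fin n, (1/2 + 2*α) * n * p ≤ (outDeg D v Finset.univ : ℝ) ∧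
    (1/2 + 2*α) * n * p ≤ (inDeg D v Finset.univ : ℝ)) ∧
  (∀ X : Finset (Fin n), (X.card : ℝ) ≤ (Real.log n)^2 / p →
    (arcsIn D X : ℝ) ≤ (X.card : ℝ) * (Real.log n) ^ (2.1 : ℝ)) ∧
  (∀ X Y : Finset (Fin n), Disjoint X Y →
    (Real.log n) ^ (1.1 : ℝ) / p ≤ (X.card : ℝ) →
    (Real.log n) ^ (1.1 : ℝ) / p ≤ (Y.card : ℝ) →
    (arcsBetween D X Y : ℝ) ≤ (1 + α/2) * X.card * Y.card * p)

/-- A `σ`-walk: all vertices distinct except possibly first = last, following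
out-arcs at `+` (true) steps and in-arcs at `-` (false) steps. -/
def IsSigmaWalk {n ℓ : ℕ} (D : Fin n → Fin n → Bool) (σ : Fin ℓ → Bool)
    (f : Fin (ℓ+1) → Fin n) : Prop :=
  (∀ i : Fin ℓ, if σ i then D (f i.castSucc) (f i.succ) = true
    else D (f i.succ) (f i.castSucc) = true) ∧
  (∀ i j : Fin (ℓ+1), f i = f j →
    i = j ∨ (i = 0 ∧ j = Fin.last ℓ) ∨ (i = Fin.last ℓ ∧ j = 0))

/-- `N^σ(A, B)`: vertices of `B` reachable from some vertex of `A` by a `σ`-walk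
all of whose vertices other than the first lie in `B`. -/
def sigmaNbhd {n ℓ : ℕ} (D : Fin n → Fin n → Bool) (σ : Fin ℓ → Bool)
    (A B : Set (Fin n)) : Set (Fin n) :=
  {y | y ∈ B ∧ ∃ f : Fin (ℓ+1) → Fin n, IsSigmaWalk D σ f ∧ f 0 ∈ A ∧
    f (Fin.last ℓ) = y ∧ ∀ i : Fin (ℓ+1), i ≠ 0 → f i ∈ B}

/-- `N^+(S, R)`: out-neighbours of `S` inside `R`. -/
def outNbhd {n : ℕ} (D : Fin n → Fin n → Bool) (S R : Finset (Fin n)) : Finset (Fin n) :=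
  R.filter fun y => ∃ x ∈ S, D x y = true

/-- `N^-(S, R)`: in-neighbours of `S` inside `R`. -/
def inNbhd {n : ℕ} (D : Fin n → Fin n → Bool) (S R : Finset (Fin n)) : Finset (Fin n) :=
  R.filter fun y => ∃ x ∈ S, D y x = true

lemma nbd_out {n : ℕ} (D : Fin n → Fin n → Bool) (S R : Finset (Fin n)) :
    nbd R (rOut D) S = outNbhd D S R := by
  ext y
  unfold nbd outNbhd rOut
  convert Iff.rfl

lemma nbd_in {n : ℕ} (D : Fin n → Fin n → Bool) (S R : Finset (Fin n)) :
    nbd R (rIn D) S = inNbhd D S R := by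
  ext y
  unfold nbd inNbhd rIn
  convert Iff.rfl

/-- Lemma 4.4: under expansion assumptions on the reservoirs `R_A, R_B`, at
least half of the given pairs can be connected by internally disjoint
`σ`-walks with interiors in `R_A ∪ R_B`. -/
theorem stmt_16 (α : ℝ) (hα : 0 < α) (p : ℕ → ℝ) (hp : ∀ n, 0 < p n ∧ p n < 1)
    (hω : Tendsto (fun n : ℕ => p n * n / (Real.log n) ^ 8) atTop atTop)
    (D : (n : ℕ) → Fin n → Fin n → Bool)
    (hD : ∀ n, IsPseudorandom n α (p n) (D n))
    (γ : ℝ) (hγ0 : 0 < γ) (hγ1 : γ < 1) :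
    ∀ᶠ n : ℕ in atTop, ∀ t ℓ : ℕ,
      5 * Real.log n ≤ (ℓ : ℝ) → 4 * (Real.log n) ^ 2 / p n ≤ (t : ℝ) →
      ∀ a b : Fin t → Fin n, Function.Injective a → Function.Injective b →
      ∀ R_A R_B : Finset (Fin n), Disjoint R_A R_B →
      (∀ i, a i ∉ R_A ∪ R_B ∧ b i ∉ R_A ∪ R_B) →
      12 * t * ℓ / γ ≤ (R_A.card : ℝ) → 12 * t * ℓ / γ ≤ (R_B.card : ℝ) →
      (∀ S ⊆ R_A ∪ R_B ∪ (Finset.image a Finset.univ ∪ Finset.image b Finset.univ),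
        (Real.log n) ^ 2 / p n ≤ (S.card : ℝ) →
        ((1/2 + γ) * R_A.card ≤ ((outNbhd (D n) S R_A).card : ℝ) ∧
          (1/2 + γ) * R_A.card ≤ ((inNbhd (D n) S R_A).card : ℝ)) ∧
        ((1/2 + γ) * R_B.card ≤ ((outNbhd (D n) S R_B).card : ℝ) ∧
          (1/2 + γ) * R_B.card ≤ ((inNbhd (D n) S R_B).card : ℝ))) →
      ∀ σ : Fin ℓ → Bool,
        ∃ I : Finset (Fin t), I.card = t / 2 ∧
          ∃ P : Fin t → Fin (ℓ + 1) → Fin n,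
            (∀ i ∈ I, IsSigmaWalk (D n) σ (P i)) ∧
            (∀ i ∈ I, P i 0 = a i ∧ P i (Fin.last ℓ) = b i) ∧
            (∀ i ∈ I, ∀ j : Fin (ℓ + 1), j ≠ 0 → j ≠ Fin.last ℓ →
              P i j ∈ R_A ∪ R_B) ∧
            (∀ i ∈ I, ∀ i' ∈ I, i ≠ i' → ∀ j j' : Fin (ℓ + 1),
              j ≠ 0 → j ≠ Fin.last ℓ → j' ≠ 0 → j' ≠ Fin.last ℓ →
              P i j ≠ P i' j') := by
  filter_upwards [Filter.eventually_ge_atTop 149] with n hn149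
  intro t ℓ hlreal htreal a b ha hb R_A R_B hdisjAB hab hRA hRB hexp σ
  classical
  have hp0 := (hp n).1
  have hp1 := (hp n).2
  have hn0 : 0 < n := by omega
  have hnR : (149:ℝ) ≤ (n:ℝ) := by exact_mod_cast hn149
  have hlog3 : (3:ℝ) ≤ Real.log n := by
    rw [Real.le_log_iff_exp_le (by positivity)]
    have h1 : Real.exp 1 < 2.7182818286 := Real.exp_one_lt_d9
    have h3 : Real.exp 3 = (Real.exp 1) ^ (3:ℕ) := by
      rw [← Real.exp_nat_mul]
      norm_num
    rw [h3]
    have h4 : (Real.exp 1)^(3:ℕ) ≤ (2.7182818286:ℝ)^(3:ℕ) :=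
      pow_le_pow_left₀ (Real.exp_pos 1).le h1.le 3
    nlinarith [h4]
  have hlog1 : (1:ℝ) ≤ Real.log n := by linarith
  set x : ℝ := (Real.log n)^2 / (p n) with hxdef
  have hx1 : (1:ℝ) ≤ x := by
    rw [hxdef, le_div_iff₀ hp0]
    nlinarith
  set s' := ⌈x⌉₊ with hs'def
  have hs'1 : 1 ≤ s' := Nat.one_le_ceil_iff.2 (by linarith)
  have hxle : x ≤ (s' : ℝ) := Nat.le_ceil x
  have hslt : ((s' : ℕ) : ℝ) < x + 1 := Nat.ceil_lt_add_one (le_trans zero_le_one hx1)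
  have htx : 4 * x ≤ (t : ℝ) := by
    rw [mul_div_assoc] at htreal
    rw [hxdef]
    exact htreal
  have ht0R : (0:ℝ) < t := by linarith
  have hl0R : (0:ℝ) < ℓ := by linarith
  have ht4 : 4 ≤ t := by
    have h : (4:ℝ) ≤ (t:ℝ) := by linarith
    exact_mod_cast h
  have hl5 : 5 ≤ ℓ := by
    have h : (5:ℝ) ≤ (ℓ:ℝ) := by linarith
    exact_mod_cast h
  have hF2 : 4 * s' ≤ t + 4 := by
    have h : ((4 * s' : ℕ) : ℝ) < ((t + 4 : ℕ) : ℝ) := by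
      push_cast
      linarith
    have h2 : 4 * s' < t + 4 := by exact_mod_cast h
    omega
  have hs't : s' ≤ t := by omega
  have hthresh : ∀ S : Finset (Fin n), s' ≤ S.card →
      (Real.log n)^2 / p n ≤ (S.card : ℝ) := by
    intro S hS
    have h1 : (s' : ℝ) ≤ (S.card : ℝ) := by exact_mod_cast hS
    calc (Real.log n)^2 / p n = x := by rw [hxdef]
      _ ≤ (s' : ℝ) := hxle
      _ ≤ (S.card : ℝ) := h1
  have htℓpos : (0:ℝ) < 12 * t * ℓ / γ := by positivity
  have hRA0 : 0 < R_A.card := by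
    have h : (0:ℝ) < R_A.card := lt_of_lt_of_le htℓpos hRA
    exact_mod_cast h
  set allowedS := R_A ∪ R_B ∪ (Finset.image a Finset.univ ∪ Finset.image b Finset.univ)
    with hallS
  have hsub_RA : R_A ⊆ allowedS :=
    (Finset.subset_union_left : R_A ⊆ R_A ∪ R_B).trans Finset.subset_union_left
  have hsub_RB : R_B ⊆ allowedS :=
    (Finset.subset_union_right : R_B ⊆ R_A ∪ R_B).trans Finset.subset_union_left
  have htRAr : (t : ℝ) ≤ (R_A.card : ℝ) := by
    have h1 : (t:ℝ) ≤ 12 * t * ℓ / γ := by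
      rw [le_div_iff₀ hγ0]
      nlinarith [hl0R, ht0R]
    linarith [hRA]
  have htRA : t ≤ R_A.card := by exact_mod_cast htRAr
  have hγ2 : γ ≤ 1/2 := by
    by_contra hγc
    push_neg at hγc
    have hcardS : (Real.log n)^2 / p n ≤ (allowedS.card : ℝ) := by
      apply hthresh
      calc s' ≤ t := hs't
        _ ≤ R_A.card := htRA
        _ ≤ allowedS.card := Finset.card_le_card hsub_RA
    obtain ⟨⟨hout, _⟩, _⟩ := hexp allowedS Finset.Subset.rfl hcardS
    have hle : ((outNbhd (D n) allowedS R_A).card : ℝ) ≤ (R_A.card : ℝ) := by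
      exact_mod_cast Finset.card_le_card (Finset.filter_subset _ _)
    have hra : (0:ℝ) < R_A.card := by exact_mod_cast hRA0
    nlinarith [mul_pos (by linarith : (0:ℝ) < γ - 1/2) hra]
  have h24A : (24 * t * ℓ : ℝ) ≤ 12 * t * ℓ / γ := by
    rw [le_div_iff₀ hγ0]
    have key : (0:ℝ) ≤ ((t:ℝ) * ℓ) * (1/2 - γ) :=
      mul_nonneg (mul_pos ht0R hl0R).le (by linarith)
    nlinarith [key]
  have hRA24 : 24 * t * ℓ ≤ R_A.card := by
    have h : ((24 * t * ℓ : ℕ) : ℝ) ≤ (R_A.card : ℝ) := by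
      push_cast
      linarith [h24A, hRA]
    exact_mod_cast h
  have hRB24 : 24 * t * ℓ ≤ R_B.card := by
    have h : ((24 * t * ℓ : ℕ) : ℝ) ≤ (R_B.card : ℝ) := by
      push_cast
      linarith [h24A, hRB]
    exact_mod_cast h
  have htn : t ≤ n := by
    have h1 : R_A.card ≤ n := by
      have h2 := Finset.card_le_univ R_A
      simpa using h2
    have h2 : t ≤ 24 * t * ℓ := by
      have h3 : t * 1 ≤ t * (24 * ℓ) := Nat.mul_le_mul_left t (by omega)
      calc t = t * 1 := (mul_one t).symm
        _ ≤ t * (24 * ℓ) := h3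
        _ = 24 * t * ℓ := by ring
    omega
  have hs'n : s' ≤ n := by omega
  have hlogfact : 2 * Nat.log 2 n + 6 ≤ ℓ := by
    have hpow : (2:ℕ) ^ (Nat.log 2 n) ≤ n := Nat.pow_log_le_self 2 (by omega)
    have hcast : (((2:ℕ) ^ (Nat.log 2 n) : ℕ) : ℝ) ≤ (n:ℝ) := by exact_mod_cast hpow
    have hlogle : (Nat.log 2 n : ℝ) * Real.log 2 ≤ Real.log n := by
      have h := Real.log_le_log (by positivity) hcast
      rw [show (((2:ℕ) ^ (Nat.log 2 n) : ℕ) : ℝ) = (2:ℝ) ^ (Nat.log 2 n) by push_cast; ring]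
        at h
      rwa [Real.log_pow] at h
    have hl2 : (0.6931471803:ℝ) < Real.log 2 := Real.log_two_gt_d9
    have hk0 : (0:ℝ) ≤ (Nat.log 2 n : ℝ) := Nat.cast_nonneg _
    have hkey : ((2 * Nat.log 2 n + 6 : ℕ) : ℝ) ≤ (ℓ : ℝ) := by
      push_cast
      have h1 : (Nat.log 2 n : ℝ) ≤ Real.log n / 0.6931471803 := by
        rw [le_div_iff₀ (by norm_num)]
        nlinarith
      have h2 : Real.log n / 0.6931471803 ≤ 1.45 * Real.log n := by
        rw [div_le_iff₀ (by norm_num)]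
        nlinarith
      nlinarith [hlreal, hlog3]
    exact_mod_cast hkey
  set kf := (ℓ - 2) / 2 with hkfdef
  set kb := ℓ - 2 - kf with hkbdef
  have hkfb : kf + kb + 2 = ℓ := by omega
  have hkf1 : 1 ≤ kf := by omega
  have hkb1 : 1 ≤ kb := by omega
  have hcapf : s' ≤ 2 ^ (kf - 1) := by
    have h1 : n < 2 ^ (Nat.log 2 n + 1) := Nat.lt_pow_succ_log_self (by norm_num) n
    have h2 : 2 ^ (Nat.log 2 n + 1) ≤ 2 ^ (kf - 1) :=
      Nat.pow_le_pow_right (by norm_num) (by omega)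
    omega
  have hcapb : s' ≤ 2 ^ (kb - 1) := by
    have h1 : n < 2 ^ (Nat.log 2 n + 1) := Nat.lt_pow_succ_log_self (by norm_num) n
    have h2 : 2 ^ (Nat.log 2 n + 1) ≤ 2 ^ (kb - 1) :=
      Nat.pow_le_pow_right (by norm_num) (by omega)
    omega
  set bigA := ⌈(1/2 + γ) * (R_A.card : ℝ)⌉₊ with hbigAdef
  set bigB := ⌈(1/2 + γ) * (R_B.card : ℝ)⌉₊ with hbigBdef
  have hbigAub : ((1/2 + γ) * (R_A.card:ℝ)) ≤ (bigA : ℝ) := Nat.le_ceil _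
  have hbigBub : ((1/2 + γ) * (R_B.card:ℝ)) ≤ (bigB : ℝ) := Nat.le_ceil _
  have hRA24r : (24 * t * ℓ : ℝ) ≤ (R_A.card : ℝ) := by exact_mod_cast hRA24
  have hRB24r : (24 * t * ℓ : ℝ) ≤ (R_B.card : ℝ) := by exact_mod_cast hRB24
  have hbigA1 : 12 * t * ℓ ≤ bigA := by
    have h : ((12 * t * ℓ : ℕ) : ℝ) ≤ (bigA : ℝ) := by
      push_cast
      nlinarith [hbigAub, hRA24r, mul_nonneg hγ0.le (Nat.cast_nonneg R_A.card)]
    exact_mod_cast h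
  have hbigB1 : 12 * t * ℓ ≤ bigB := by
    have h : ((12 * t * ℓ : ℕ) : ℝ) ≤ (bigB : ℝ) := by
      push_cast
      nlinarith [hbigBub, hRB24r, mul_nonneg hγ0.le (Nat.cast_nonneg R_B.card)]
    exact_mod_cast h
  have hbig2A : R_A.card + 24 * t * ℓ ≤ 2 * bigA := by
    have hgam : (12 * t * ℓ : ℝ) ≤ γ * R_A.card := by
      rw [div_le_iff₀ hγ0] at hRA
      nlinarith [hRA]
    have h : ((R_A.card + 24 * t * ℓ : ℕ):ℝ) ≤ ((2 * bigA : ℕ):ℝ) := by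
      push_cast
      nlinarith [hbigAub]
    exact_mod_cast h
  set σ' : ℕ → Bool := fun q => if h : q < ℓ then σ ⟨q, h⟩ else false with hσ'def
  have hσ'eq : ∀ i : Fin ℓ, σ' i.val = σ i := by
    intro i
    simp only [hσ'def]
    rw [dif_pos i.isLt, Fin.eta]
  have hexpA' : ∀ (tp : Bool) (S : Finset (Fin n)), S ⊆ allowedS → s' ≤ S.card →
      bigA ≤ (nbd R_A (sg (D n) tp) S).card := by
    intro tp S hS hcard
    obtain ⟨⟨hout, hin⟩, _⟩ := hexp S hS (hthresh S hcard)
    cases tp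
    · show bigA ≤ (nbd R_A (rIn (D n)) S).card
      rw [nbd_in]
      exact Nat.ceil_le.2 hin
    · show bigA ≤ (nbd R_A (rOut (D n)) S).card
      rw [nbd_out]
      exact Nat.ceil_le.2 hout
  have hexpB' : ∀ (tp : Bool) (S : Finset (Fin n)), S ⊆ allowedS → s' ≤ S.card →
      bigB ≤ (nbd R_B (sg (D n) tp) S).card := by
    intro tp S hS hcard
    obtain ⟨_, hout, hin⟩ := hexp S hS (hthresh S hcard)
    cases tp
    · show bigB ≤ (nbd R_B (rIn (D n)) S).card
      rw [nbd_in]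
      exact Nat.ceil_le.2 hin
    · show bigB ≤ (nbd R_B (rOut (D n)) S).card
      rw [nbd_out]
      exact Nat.ceil_le.2 hout
  -- the iterative rounds
  have rounds : ∀ r, r ≤ t / 2 → ∃ (I : Finset (Fin t)) (P : Fin t → Fin (ℓ + 1) → Fin n),
      I.card = r ∧
      (∀ i ∈ I, IsSigmaWalk (D n) σ (P i)) ∧
      (∀ i ∈ I, P i 0 = a i ∧ P i (Fin.last ℓ) = b i) ∧
      (∀ i ∈ I, ∀ j : Fin (ℓ + 1), j ≠ 0 → j ≠ Fin.last ℓ → P i j ∈ R_A ∪ R_B) ∧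
      (∀ i ∈ I, ∀ i' ∈ I, i ≠ i' → ∀ j j' : Fin (ℓ + 1), j ≠ 0 → j ≠ Fin.last ℓ →
        j' ≠ 0 → j' ≠ Fin.last ℓ → P i j ≠ P i' j') := by
    intro r
    induction r with
    | zero =>
      intro _
      refine ⟨∅, fun _ _ => (⟨0, hn0⟩ : Fin n), by simp, ?_, ?_, ?_, ?_⟩ <;> simp
    | succ r ih =>
      intro hr
      obtain ⟨I, P, hIcard, hwalk, hends, hintmem, hdisjP⟩ := ih (by omega)
      set U := I.biUnion (fun i' => (Finset.univ.filter
        (fun j : Fin (ℓ+1) => j ≠ 0 ∧ j ≠ Fin.last ℓ)).image (P i')) with hUdef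
      have hUmem : ∀ i' ∈ I, ∀ j : Fin (ℓ+1), j ≠ 0 → j ≠ Fin.last ℓ → P i' j ∈ U := by
        intro i' hi' j h0 hl
        rw [hUdef]
        exact Finset.mem_biUnion.2 ⟨i', hi', Finset.mem_image.2
          ⟨j, Finset.mem_filter.2 ⟨Finset.mem_univ _, h0, hl⟩, rfl⟩⟩
      have hUcard : U.card ≤ r * (ℓ + 1) := by
        rw [hUdef]
        calc _ ≤ ∑ i' ∈ I, ((Finset.univ.filter
              (fun j : Fin (ℓ+1) => j ≠ 0 ∧ j ≠ Fin.last ℓ)).image (P i')).card :=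
            Finset.card_biUnion_le
          _ ≤ ∑ _i' ∈ I, (ℓ + 1) := by
              refine Finset.sum_le_sum fun i' _ => ?_
              calc ((Finset.univ.filter
                    (fun j : Fin (ℓ+1) => j ≠ 0 ∧ j ≠ Fin.last ℓ)).image (P i')).card
                  ≤ (Finset.univ.filter
                    (fun j : Fin (ℓ+1) => j ≠ 0 ∧ j ≠ Fin.last ℓ)).card :=
                    Finset.card_image_le
                _ ≤ (Finset.univ : Finset (Fin (ℓ+1))).card :=
                    Finset.card_filter_le _ _
                _ = ℓ + 1 := by simp
          _ = r * (ℓ + 1) := by rw [Finset.sum_const, hIcard, smul_eq_mul]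
      set J := (Finset.univ : Finset (Fin t)) \ I with hJdef
      have hJcard : 2 * s' - 1 ≤ J.card := by
        rw [hJdef, Finset.card_sdiff_of_subset (Finset.subset_univ I), hIcard]
        simp only [Finset.card_univ, Fintype.card_fin]
        omega
      have hUb : U.card ≤ t * ℓ + t := by
        have h1 : r * (ℓ + 1) ≤ t * (ℓ + 1) := Nat.mul_le_mul_right _ (by omega)
        have h2 : t * (ℓ + 1) = t * ℓ + t := by ring
        omega
      have hmul1 : 2 * s' * ℓ ≤ t * ℓ := Nat.mul_le_mul_right _ (by omega)
      have hmul2 : (ℓ + 2) * (2 * s') = 2 * s' * ℓ + 4 * s' := by ring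
      have hmul3 : ℓ * s' ≤ t * ℓ := by
        calc ℓ * s' ≤ ℓ * t := Nat.mul_le_mul_left _ hs't
          _ = t * ℓ := by ring
      have hmul4 : t ≤ t * ℓ := Nat.le_mul_of_pos_right t (by omega)
      have hmul5 : 12 * t * ℓ = 12 * (t * ℓ) := by ring
      have hmul6 : 24 * t * ℓ = 24 * (t * ℓ) := by ring
      have hn1A : (ℓ + 2) * (2 * s') + 3 * s' + U.card < bigA := by omega
      have hn1B : (ℓ + 2) * (2 * s') + 3 * s' + U.card < bigB := by omega
      have hn3 : R_A.card + 2 * U.card + 2 * (ℓ * s') < 2 * bigA := by omega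
      obtain ⟨i, hiJ, w, hw0, hwl, hint, harc, hinjw⟩ :=
        round_core (D n) R_A R_B U hdisjAB a b ha hb σ' ℓ s' kf kb bigA bigB hs'1
          hkfb hkf1 hkb1 hcapf hcapb J hJcard hexpA' hexpB' hn1A hn1B hn3
      have hiI : i ∉ I := by
        rw [hJdef] at hiJ
        exact (Finset.mem_sdiff.1 hiJ).2
      set f : Fin (ℓ+1) → Fin n := fun j => w j.val with hfdef
      have hintval : ∀ j : Fin (ℓ+1), j ≠ 0 → j ≠ Fin.last ℓ →
          1 ≤ j.val ∧ j.val ≤ ℓ - 1 := by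
        intro j h0 hl
        have hjlt := j.isLt
        constructor
        · by_contra hc
          push_neg at hc
          exact h0 (Fin.ext (by simpa using (by omega : j.val = 0)))
        · by_contra hc
          push_neg at hc
          exact hl (Fin.ext (by simp only [Fin.val_last]; omega))
      have hfmem : ∀ j : Fin (ℓ+1), j ≠ 0 → j ≠ Fin.last ℓ →
          f j ∈ (R_A ∪ R_B) \ U := by
        intro j h0 hl
        obtain ⟨h1, h2⟩ := hintval j h0 hl
        exact hint j.val h1 h2
      have hf0 : f 0 = a i := by
        show w ((0 : Fin (ℓ+1)).val) = a i
        rw [Fin.val_zero]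
        exact hw0
      have hfl : f (Fin.last ℓ) = b i := by
        show w ((Fin.last ℓ).val) = b i
        rw [Fin.val_last]
        exact hwl
      have hwalknew : IsSigmaWalk (D n) σ f := by
        constructor
        · intro iℓ
          have ha' := harc iℓ.val iℓ.isLt
          rw [hσ'eq iℓ] at ha'
          by_cases hσi : σ iℓ = true
          · rw [if_pos hσi]
            rw [if_pos hσi] at ha'
            show D n (w iℓ.castSucc.val) (w iℓ.succ.val) = true
            rw [Fin.coe_castSucc, Fin.val_succ]
            exact ha'
          · rw [if_neg hσi]
            rw [if_neg hσi] at ha'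
            show D n (w iℓ.succ.val) (w iℓ.castSucc.val) = true
            rw [Fin.coe_castSucc, Fin.val_succ]
            exact ha'
        · intro j j' heq
          have heqw : w j.val = w j'.val := heq
          by_cases hjj : j.val = j'.val
          · exact Or.inl (Fin.ext hjj)
          · have hj := j.isLt
            have hj' := j'.isLt
            by_cases hz : j.val = 0
            · by_cases hz' : j'.val = ℓ
              · exact Or.inr (Or.inl ⟨Fin.ext (by simpa using hz),
                  Fin.ext (by simp only [Fin.val_last]; omega)⟩)
              · exfalso
                have hj'int : 1 ≤ j'.val ∧ j'.val ≤ ℓ - 1 := by omega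
                have hmem := hint j'.val hj'int.1 hj'int.2
                have hmm : w j'.val ∈ R_A ∪ R_B := (Finset.mem_sdiff.1 hmem).1
                rw [hz, hw0] at heqw
                exact (hab i).1 (by rw [heqw]; exact hmm)
            · by_cases hz2 : j.val = ℓ
              · by_cases hz' : j'.val = 0
                · exact Or.inr (Or.inr ⟨Fin.ext (by simp only [Fin.val_last]; omega),
                    Fin.ext (by simpa using hz')⟩)
                · by_cases hz'2 : j'.val = ℓ
                  · exact absurd (hz2.trans hz'2.symm) hjj
                  · exfalso
                    have hj'int : 1 ≤ j'.val ∧ j'.val ≤ ℓ - 1 := by omega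
                    have hmem := hint j'.val hj'int.1 hj'int.2
                    have hmm : w j'.val ∈ R_A ∪ R_B := (Finset.mem_sdiff.1 hmem).1
                    rw [hz2, hwl] at heqw
                    exact (hab i).2 (by rw [heqw]; exact hmm)
              · by_cases hz' : j'.val = 0
                · exfalso
                  have hjint : 1 ≤ j.val ∧ j.val ≤ ℓ - 1 := by omega
                  have hmem := hint j.val hjint.1 hjint.2
                  have hmm : w j.val ∈ R_A ∪ R_B := (Finset.mem_sdiff.1 hmem).1
                  rw [hz', hw0] at heqw
                  exact (hab i).1 (by rw [← heqw]; exact hmm)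
                · by_cases hz'2 : j'.val = ℓ
                  · exfalso
                    have hjint : 1 ≤ j.val ∧ j.val ≤ ℓ - 1 := by omega
                    have hmem := hint j.val hjint.1 hjint.2
                    have hmm : w j.val ∈ R_A ∪ R_B := (Finset.mem_sdiff.1 hmem).1
                    rw [hz'2, hwl] at heqw
                    exact (hab i).2 (by rw [← heqw]; exact hmm)
                  · exfalso
                    rcases Nat.lt_or_ge j.val j'.val with hlt | hge
                    · exact hinjw j.val j'.val (by omega) hlt (by omega) heqw
                    · exact hinjw j'.val j.val (by omega) (by omega) (by omega) heqw.symm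
      refine ⟨insert i I, Function.update P i f, ?_, ?_, ?_, ?_, ?_⟩
      · rw [Finset.card_insert_of_notMem hiI, hIcard]
      · intro i' hi'
        rcases Finset.mem_insert.1 hi' with rfl | hi'I
        · rw [Function.update_self]
          exact hwalknew
        · rw [Function.update_of_ne (by rintro rfl; exact hiI hi'I)]
          exact hwalk i' hi'I
      · intro i' hi'
        rcases Finset.mem_insert.1 hi' with rfl | hi'I
        · rw [Function.update_self]
          exact ⟨hf0, hfl⟩
        · rw [Function.update_of_ne (by rintro rfl; exact hiI hi'I)]
          exact hends i' hi'I
      · intro i' hi' j h0 hl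
        rcases Finset.mem_insert.1 hi' with rfl | hi'I
        · rw [Function.update_self]
          exact (Finset.mem_sdiff.1 (hfmem j h0 hl)).1
        · rw [Function.update_of_ne (by rintro rfl; exact hiI hi'I)]
          exact hintmem i' hi'I j h0 hl
      · intro i1 hi1 i2 hi2 hne j j' hj0 hjl hj'0 hj'l
        rcases Finset.mem_insert.1 hi1 with rfl | h1
        · rcases Finset.mem_insert.1 hi2 with rfl | h2
          · exact absurd rfl hne
          · rw [Function.update_self,
              Function.update_of_ne (by rintro rfl; exact hiI h2)]
            intro heq
            have hnew := hfmem j hj0 hjl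
            have hold := hUmem i2 h2 j' hj'0 hj'l
            rw [heq] at hnew
            exact (Finset.mem_sdiff.1 hnew).2 hold
        · rcases Finset.mem_insert.1 hi2 with rfl | h2
          · rw [Function.update_self,
              Function.update_of_ne (by rintro rfl; exact hiI h1)]
            intro heq
            have hnew := hfmem j' hj'0 hj'l
            have hold := hUmem i1 h1 j hj0 hjl
            rw [← heq] at hnew
            exact (Finset.mem_sdiff.1 hnew).2 hold
          · rw [Function.update_of_ne (by rintro rfl; exact hiI h1),
              Function.update_of_ne (by rintro rfl; exact hiI h2)]
            exact hdisjP i1 h1 i2 h2 hne j j' hj0 hjl hj'0 hj'l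
  obtain ⟨I, P, hc, h1, h2, h3, h4⟩ := rounds (t / 2) le_rfl
  exact ⟨I, hc, P, h1, h2, h3, h4⟩
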